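/- (Iterated limit property) Let f ∈ R(x). Then for all sufficiently small ε > 0 and any u ∈ ℝ^n: lc(lc(f)(p^u x)) = lc(f(p^{εu} x)) and val(f) + ε·val(lc(f)(p^u x)) = val(f(p^{εu} x)). -/

import Mathlib

set_option maxHeartbeats 1000000
set_option synthInstance.maxHeartbeats 1000000


noncomputable section
open Classical

/-- Multivariate polynomials in `n` variables over `ℂ`. -/
abbrev MvP (n : ℕ) := MvPolynomial (Fin n) ℂ

/-- The field of rational functions in `n` variables over `ℂ`. -/
abbrev KK (n : ℕ) := FractionRing (MvP n)

/-- The minimal `ε`-weight `min_{m ∈ supp f} ∑ i, ε i * m i` of a multivariate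
polynomial: the `p`-adic valuation of `f(p^{ε₁}x₁, …, p^{εₙ}xₙ)`. -/
def mvValEps (n : ℕ) (ε : Fin n → ℝ) (f : MvP n) : ℝ :=
  if h : f.support.Nonempty then f.support.inf' h (fun m => ∑ i, ε i * (m i : ℝ)) else 0

/-- `deg_ε(r)` for a rational function `r`: the `p`-adic valuation of
`r(p^{ε₁}x₁, …, p^{εₙ}xₙ)`, computed from a fraction representation of `r`. -/
def degEps (n : ℕ) (ε : Fin n → ℝ) (r : KK n) : ℝ :=
  mvValEps n ε (IsLocalization.sec (nonZeroDivisors (MvP n)) r).1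
  - mvValEps n ε ((IsLocalization.sec (nonZeroDivisors (MvP n)) r).2 : MvP n)

/-- The degree `deg(r) = -inf_{ε ≠ 0} deg_ε(r)/‖ε‖` of a rational function, with
`‖·‖` the supremum norm on `Fin n → ℝ`. -/
def degK (n : ℕ) (r : KK n) : ℝ :=
  -sInf {d : ℝ | ∃ ε : Fin n → ℝ, ε ≠ 0 ∧ d = degEps n ε r / ‖ε‖}

/-- Membership in `F(x)`: a Hahn series over `ℝ` with rational-function coefficients
whose exponent set is discrete and bounded below, i.e. only finitely many exponents lie
below any given real number. -/
def FiniteBelow (n : ℕ) (f : HahnSeries ℝ (KK n)) : Prop :=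
  ∀ r : ℝ, {t ∈ f.support | t ≤ r}.Finite

/-- Membership in `R(x) ⊂ F(x)`: the coefficients satisfy the degree-growth bound
`deg(a_t) ≤ C (t - val f)` for all exponents `t > val f`, for some constant `C`. -/
def InR (n : ℕ) (f : HahnSeries ℝ (KK n)) : Prop :=
  FiniteBelow n f ∧
    ∃ C : ℝ, ∀ t ∈ f.support, t ≠ f.order → degK n (f.coeff t) ≤ C * (t - f.order)

/-- The substitution `f(p^{ε₁}x₁, …, p^{εₙ}xₙ)` of a polynomial `f`, as a Hahn series
in `p` with rational-function coefficients. -/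
def polySubst (n : ℕ) (ε : Fin n → ℝ) (f : MvP n) : HahnSeries ℝ (KK n) :=
  ∑ m ∈ f.support, HahnSeries.single (∑ i, ε i * (m i : ℝ))
    (algebraMap (MvP n) (KK n) (MvPolynomial.monomial m (MvPolynomial.coeff m f)))

/-- The substitution `r(p^{ε₁}x₁, …, p^{εₙ}xₙ)` of a rational function `r`, as an
element of the field of Hahn series in `p` with rational-function coefficients. -/
def ratSubst (n : ℕ) (ε : Fin n → ℝ) (r : KK n) : HahnSeries ℝ (KK n) :=
  polySubst n ε (IsLocalization.sec (nonZeroDivisors (MvP n)) r).1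
  / polySubst n ε ((IsLocalization.sec (nonZeroDivisors (MvP n)) r).2 : MvP n)

/-- The substitution `f(p^{ε₁}x₁, …, p^{εₙ}xₙ)` of a series `f = ∑_t a_t p^t`: the
series `∑_t a_t(p^ε x) p^t` re-expanded in `p`, characterized coefficientwise by
`coeff s = ∑_t (a_t(p^ε x)).coeff (s - t)`; junk value `0` when no such Hahn series
exists. -/
def serSubst (n : ℕ) (ε : Fin n → ℝ) (f : HahnSeries ℝ (KK n)) : HahnSeries ℝ (KK n) :=
  if h : ∃ g : HahnSeries ℝ (KK n),
      ∀ s : ℝ, g.coeff s = ∑ᶠ t : ℝ, (ratSubst n ε (f.coeff t)).coeff (s - t)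
  then h.choose else 0


namespace IterAux
open HahnSeries

variable {n : ℕ}

def wt (ε : Fin n → ℝ) (m : Fin n →₀ ℕ) : ℝ := ∑ i, ε i * (m i : ℝ)

lemma phi_inj : Function.Injective (algebraMap (MvP n) (KK n)) :=
  IsFractionRing.injective _ _

lemma polySubst_coeff (ε : Fin n → ℝ) (P : MvP n) (s : ℝ) :
    (polySubst n ε P).coeff s = algebraMap (MvP n) (KK n)
      (∑ m ∈ P.support.filter (fun m => wt ε m = s),
        MvPolynomial.monomial m (MvPolynomial.coeff m P)) := by
  rw [polySubst, map_sum]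
  rw [show ((∑ m ∈ P.support, HahnSeries.single (∑ i, ε i * (m i : ℝ))
      (algebraMap (MvP n) (KK n) (MvPolynomial.monomial m (MvPolynomial.coeff m P)))).coeff s)
    = HahnSeries.coeff.addMonoidHom s (∑ m ∈ P.support, HahnSeries.single (∑ i, ε i * (m i : ℝ))
      (algebraMap (MvP n) (KK n) (MvPolynomial.monomial m (MvPolynomial.coeff m P)))) from rfl,
    map_sum]
  rw [Finset.sum_filter]
  apply Finset.sum_congr rfl
  intro m _
  simp only [coeff.addMonoidHom, AddMonoidHom.coe_mk, ZeroHom.coe_mk, wt]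
  by_cases h : (∑ i, ε i * (m i : ℝ)) = s
  · simp only [h, ↓reduceIte, HahnSeries.coeff_single_same]
  · simp only [h, ↓reduceIte, HahnSeries.coeff_single_of_ne (fun hs => h hs.symm)]

lemma sum_monomial_ne_zero {P : MvP n} {S : Finset (Fin n →₀ ℕ)} (hS : S ⊆ P.support)
    (hne : S.Nonempty) : (∑ m ∈ S, MvPolynomial.monomial m (MvPolynomial.coeff m P)) ≠ 0 := by
  obtain ⟨m₀, hm₀⟩ := hne
  intro h
  have h2 := congrArg (MvPolynomial.coeff m₀) h
  rw [MvPolynomial.coeff_sum] at h2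
  simp only [MvPolynomial.coeff_monomial, MvPolynomial.coeff_zero] at h2
  rw [Finset.sum_ite_eq' S m₀ (fun m => MvPolynomial.coeff m P), if_pos hm₀] at h2
  exact (MvPolynomial.mem_support_iff.mp (hS hm₀)) h2

lemma mvValEps_le_wt {ε : Fin n → ℝ} {P : MvP n} {m : Fin n →₀ ℕ} (hm : m ∈ P.support) :
    mvValEps n ε P ≤ wt ε m := by
  rw [mvValEps, dif_pos ⟨m, hm⟩]
  exact Finset.inf'_le _ hm

lemma exists_wt_eq_mvValEps {ε : Fin n → ℝ} {P : MvP n} (hP : P ≠ 0) :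
    ∃ m ∈ P.support, wt ε m = mvValEps n ε P := by
  have h : P.support.Nonempty := MvPolynomial.support_nonempty.mpr hP
  rw [mvValEps, dif_pos h]
  obtain ⟨m, hm, he⟩ := Finset.exists_mem_eq_inf' h (fun m => ∑ i, ε i * (m i : ℝ))
  exact ⟨m, hm, he.symm⟩

lemma polySubst_coeff_mvValEps {ε : Fin n → ℝ} {P : MvP n} (hP : P ≠ 0) :
    (polySubst n ε P).coeff (mvValEps n ε P) ≠ 0 := by
  rw [polySubst_coeff]
  rw [Ne, map_eq_zero_iff _ phi_inj]
  apply sum_monomial_ne_zero (Finset.filter_subset _ _)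
  obtain ⟨m, hm, he⟩ := exists_wt_eq_mvValEps (ε := ε) hP
  exact ⟨m, Finset.mem_filter.mpr ⟨hm, he⟩⟩

lemma polySubst_ne_zero {ε : Fin n → ℝ} {P : MvP n} (hP : P ≠ 0) :
    polySubst n ε P ≠ 0 :=
  HahnSeries.ne_zero_of_coeff_ne_zero (polySubst_coeff_mvValEps hP)

lemma polySubst_coeff_eq_zero {ε : Fin n → ℝ} {P : MvP n} {s : ℝ}
    (hs : s < mvValEps n ε P) : (polySubst n ε P).coeff s = 0 := by
  rw [polySubst_coeff]
  convert map_zero (algebraMap (MvP n) (KK n))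
  apply Finset.sum_eq_zero
  intro m hm
  rw [Finset.mem_filter] at hm
  exact absurd (hm.2 ▸ mvValEps_le_wt hm.1) (not_le.mpr hs)

lemma order_eq_of {x : HahnSeries ℝ (KK n)} {s : ℝ} (h1 : x.coeff s ≠ 0)
    (h2 : ∀ s' < s, x.coeff s' = 0) : x.order = s := by
  have hx : x ≠ 0 := HahnSeries.ne_zero_of_coeff_ne_zero h1
  refine le_antisymm (HahnSeries.order_le_of_coeff_ne_zero h1) ?_
  by_contra h
  push_neg at h
  exact (mt HahnSeries.coeff_order_eq_zero.mp hx) (h2 _ h)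

lemma polySubst_order {ε : Fin n → ℝ} {P : MvP n} (hP : P ≠ 0) :
    (polySubst n ε P).order = mvValEps n ε P :=
  order_eq_of (polySubst_coeff_mvValEps hP) (fun _ hs => polySubst_coeff_eq_zero hs)

lemma den_ne_zero (r : KK n) :
    ((IsLocalization.sec (nonZeroDivisors (MvP n)) r).2 : MvP n) ≠ 0 :=
  nonZeroDivisors.coe_ne_zero _

lemma num_ne_zero {r : KK n} (hr : r ≠ 0) :
    (IsLocalization.sec (nonZeroDivisors (MvP n)) r).1 ≠ 0 := by
  intro h
  have hs := IsLocalization.sec_spec (M := nonZeroDivisors (MvP n)) r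
  rw [h, map_zero] at hs
  rcases mul_eq_zero.mp hs with h1 | h1
  · exact hr h1
  · exact den_ne_zero r ((map_eq_zero_iff _ phi_inj).mp h1)

lemma num_eq_zero : (IsLocalization.sec (nonZeroDivisors (MvP n)) (0 : KK n)).1 = 0 := by
  have hs := IsLocalization.sec_spec (M := nonZeroDivisors (MvP n)) (0 : KK n)
  rw [zero_mul] at hs
  exact phi_inj (hs.symm.trans (map_zero _).symm)

lemma ratSubst_ne_zero {ε : Fin n → ℝ} {r : KK n} (hr : r ≠ 0) : ratSubst n ε r ≠ 0 := by
  rw [ratSubst]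
  exact div_ne_zero (G₀ := HahnSeries ℝ (KK n)) (polySubst_ne_zero (num_ne_zero hr))
    (polySubst_ne_zero (den_ne_zero r))

lemma polySubst_zero (ε : Fin n → ℝ) : polySubst n ε (0 : MvP n) = 0 := by
  rw [polySubst, MvPolynomial.support_zero, Finset.sum_empty]

lemma ratSubst_zero (ε : Fin n → ℝ) : ratSubst n ε (0 : KK n) = 0 := by
  rw [ratSubst, num_eq_zero, polySubst_zero]
  exact zero_div (G₀ := HahnSeries ℝ (KK n)) _

lemma ratSubst_order {ε : Fin n → ℝ} {r : KK n} (hr : r ≠ 0) :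
    (ratSubst n ε r).order = degEps n ε r := by
  have ha := polySubst_ne_zero (ε := ε) (num_ne_zero hr)
  have hb := polySubst_ne_zero (ε := ε) (den_ne_zero r)
  have hq : ratSubst n ε r ≠ 0 := ratSubst_ne_zero hr
  have hmul : ratSubst n ε r *
      polySubst n ε ((IsLocalization.sec (nonZeroDivisors (MvP n)) r).2 : MvP n)
      = polySubst n ε (IsLocalization.sec (nonZeroDivisors (MvP n)) r).1 := by
    rw [ratSubst]
    exact div_mul_cancel₀ (G₀ := HahnSeries ℝ (KK n)) _ hb
  have ho := congrArg HahnSeries.order hmul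
  rw [HahnSeries.order_mul hq hb, polySubst_order (num_ne_zero hr),
    polySubst_order (den_ne_zero r)] at ho
  rw [degEps]
  linarith

def cmulHom (c : ℝ) : ℝ →+ ℝ where
  toFun := fun x => c * x
  map_zero' := mul_zero c
  map_add' := mul_add c

def emb {c : ℝ} (hc : 0 < c) : HahnSeries ℝ (KK n) →+* HahnSeries ℝ (KK n) :=
  HahnSeries.embDomainRingHom (cmulHom c) (fun _ _ h => mul_left_cancel₀ hc.ne' h)
    (fun _ _ => mul_le_mul_iff_right₀ hc)

lemma emb_coeff {c : ℝ} (hc : 0 < c) (x : HahnSeries ℝ (KK n)) (s : ℝ) :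
    (emb hc x).coeff (c * s) = x.coeff s := by
  rw [emb]
  exact HahnSeries.embDomain_coeff (a := s)

lemma emb_coeff' {c : ℝ} (hc : 0 < c) (x : HahnSeries ℝ (KK n)) (s : ℝ) :
    (emb hc x).coeff s = x.coeff (s / c) := by
  have h : s = c * (s / c) := (mul_div_cancel₀ s hc.ne').symm
  conv_lhs => rw [h]
  rw [emb_coeff hc x (s / c)]

lemma wt_smul (c : ℝ) (u : Fin n → ℝ) (m : Fin n →₀ ℕ) :
    (∑ i, (c • u) i * (m i : ℝ)) = c * ∑ i, u i * (m i : ℝ) := by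
  rw [Finset.mul_sum]
  refine Finset.sum_congr rfl fun i _ => ?_
  simp [mul_assoc]

lemma emb_single {c : ℝ} (hc : 0 < c) (s : ℝ) (r : KK n) :
    emb hc (HahnSeries.single s r) = HahnSeries.single (c * s) r := by
  ext y
  rw [emb_coeff' hc]
  by_cases h : y = c * s
  · subst h
    rw [mul_div_cancel_left₀ _ hc.ne', HahnSeries.coeff_single_same,
      HahnSeries.coeff_single_same]
  · rw [HahnSeries.coeff_single_of_ne h, HahnSeries.coeff_single_of_ne]
    intro hh
    exact h (by rw [← hh, mul_div_cancel₀ _ hc.ne'])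

lemma polySubst_smul {c : ℝ} (hc : 0 < c) (u : Fin n → ℝ) (P : MvP n) :
    polySubst n (c • u) P = emb hc (polySubst n u P) := by
  rw [polySubst, polySubst, map_sum]
  refine Finset.sum_congr rfl fun m _ => ?_
  rw [wt_smul c u m]
  exact (emb_single hc _ _).symm

lemma ratSubst_smul {c : ℝ} (hc : 0 < c) (u : Fin n → ℝ) (r : KK n) :
    ratSubst n (c • u) r = emb hc (ratSubst n u r) := by
  have hb : polySubst n (c • u)
      ((IsLocalization.sec (nonZeroDivisors (MvP n)) r).2 : MvP n) ≠ 0 :=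
    polySubst_ne_zero (den_ne_zero r)
  rw [ratSubst, ratSubst, div_eq_iff (G₀ := HahnSeries ℝ (KK n)) ?hb]
  case hb => exact hb
  rw [polySubst_smul hc, polySubst_smul hc, ← map_mul,
    div_mul_cancel₀ (G₀ := HahnSeries ℝ (KK n)) _ (polySubst_ne_zero (den_ne_zero r))]

lemma emb_order {c : ℝ} (hc : 0 < c) {x : HahnSeries ℝ (KK n)} (hx : x ≠ 0) :
    (emb hc x).order = c * x.order := by
  apply order_eq_of
  · rw [emb_coeff hc]
    exact mt HahnSeries.coeff_order_eq_zero.mp hx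
  · intro s hs
    rw [emb_coeff' hc]
    apply HahnSeries.coeff_eq_zero_of_lt_order
    rw [div_lt_iff₀' hc]
    exact hs

lemma abs_wt_le (ε : Fin n → ℝ) (m : Fin n →₀ ℕ) (d : ℕ) (hd : (m.sum fun _ e => e) ≤ d) :
    |wt ε m| ≤ ‖ε‖ * d := by
  have h1 : |wt ε m| ≤ ∑ i, |ε i * (m i : ℝ)| := Finset.abs_sum_le_sum_abs _ _
  have h2 : ∀ i : Fin n, |ε i * (m i : ℝ)| ≤ ‖ε‖ * (m i : ℝ) := by
    intro i
    rw [abs_mul, Nat.abs_cast]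
    exact mul_le_mul_of_nonneg_right ((Real.norm_eq_abs _) ▸ norm_le_pi_norm ε i)
      (Nat.cast_nonneg _)
  have h3 : (∑ i, |ε i * (m i : ℝ)|) ≤ ∑ i, ‖ε‖ * (m i : ℝ) :=
    Finset.sum_le_sum fun i _ => h2 i
  have h4 : (∑ i, ‖ε‖ * (m i : ℝ)) = ‖ε‖ * ∑ i, (m i : ℝ) := by rw [Finset.mul_sum]
  have h5 : (∑ i, (m i : ℝ)) ≤ (d : ℝ) := by
    have : (m.sum fun _ e => e) = ∑ i, m i := Finsupp.sum_fintype _ _ (fun _ => rfl)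
    rw [← Nat.cast_sum]
    exact_mod_cast this ▸ hd
  nlinarith [norm_nonneg ε]

lemma abs_mvValEps_le (ε : Fin n → ℝ) (P : MvP n) :
    |mvValEps n ε P| ≤ ‖ε‖ * P.totalDegree := by
  by_cases h : P.support.Nonempty
  · obtain ⟨m, hm, he⟩ := Finset.exists_mem_eq_inf' h (fun m => ∑ i, ε i * (m i : ℝ))
    rw [mvValEps, dif_pos h, he]
    exact abs_wt_le ε m P.totalDegree (Finset.le_sup (f := fun m => m.sum fun _ e => e) hm)
  · rw [mvValEps, dif_neg h, abs_zero]
    positivity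

lemma abs_degEps_le (ε : Fin n → ℝ) (r : KK n) :
    |degEps n ε r| ≤ ‖ε‖ *
      (((IsLocalization.sec (nonZeroDivisors (MvP n)) r).1.totalDegree : ℝ)
       + (((IsLocalization.sec (nonZeroDivisors (MvP n)) r).2 : MvP n).totalDegree : ℝ)) := by
  rw [degEps]
  have h1 := abs_mvValEps_le ε (IsLocalization.sec (nonZeroDivisors (MvP n)) r).1
  have h2 := abs_mvValEps_le ε ((IsLocalization.sec (nonZeroDivisors (MvP n)) r).2 : MvP n)
  have := abs_sub (mvValEps n ε (IsLocalization.sec (nonZeroDivisors (MvP n)) r).1)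
    (mvValEps n ε ((IsLocalization.sec (nonZeroDivisors (MvP n)) r).2 : MvP n))
  nlinarith

lemma neg_norm_degK_le {u : Fin n → ℝ} (hu : u ≠ 0) (r : KK n) :
    -‖u‖ * degK n r ≤ degEps n u r := by
  set S := {d : ℝ | ∃ ε : Fin n → ℝ, ε ≠ 0 ∧ d = degEps n ε r / ‖ε‖} with hS
  set M : ℝ := ((IsLocalization.sec (nonZeroDivisors (MvP n)) r).1.totalDegree : ℝ)
       + (((IsLocalization.sec (nonZeroDivisors (MvP n)) r).2 : MvP n).totalDegree : ℝ) with hM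
  have hmem : degEps n u r / ‖u‖ ∈ S := ⟨u, hu, rfl⟩
  have hbdd : BddBelow S := by
    refine ⟨-M, ?_⟩
    rintro d ⟨ε, hε, rfl⟩
    have hpos : (0:ℝ) < ‖ε‖ := norm_pos_iff.mpr hε
    have := abs_degEps_le ε r
    rw [le_div_iff₀ hpos]
    nlinarith [abs_le.mp (abs_degEps_le ε r)]
  have hinf : sInf S ≤ degEps n u r / ‖u‖ := csInf_le hbdd hmem
  have hpos : (0:ℝ) < ‖u‖ := norm_pos_iff.mpr hu
  rw [degK]
  rw [le_div_iff₀ hpos] at hinf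
  nlinarith

lemma mvValEps_zero (P : MvP n) : mvValEps n (0 : Fin n → ℝ) P = 0 := by
  rw [mvValEps]
  split_ifs with h
  · have : (fun m : Fin n →₀ ℕ => ∑ i, (0:ℝ) * (m i : ℝ)) = fun _ => (0:ℝ) := by
      funext m; simp
    simp only [Pi.zero_apply, zero_mul, Finset.sum_const_zero]
    exact Finset.inf'_const h 0
  · rfl

lemma degEps_zero (r : KK n) : degEps n (0 : Fin n → ℝ) r = 0 := by
  rw [degEps, mvValEps_zero, mvValEps_zero, sub_zero]

lemma exists_gap (f : HahnSeries ℝ (KK n)) (hFin : FiniteBelow n f) :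
    ∃ δ : ℝ, 0 < δ ∧ δ ≤ 1 ∧ ∀ t ∈ f.support, t ≠ f.order → f.order + δ ≤ t := by
  classical
  have hvle : ∀ t ∈ f.support, f.order ≤ t := fun t ht =>
    HahnSeries.order_le_of_coeff_ne_zero ht
  have hfin := hFin (f.order + 1)
  set S := hfin.toFinset.filter (fun t => t ≠ f.order) with hS
  by_cases hSne : S.Nonempty
  · refine ⟨min (S.min' hSne - f.order) 1, ?_, min_le_right _ _, ?_⟩
    · have hm := Finset.mem_filter.mp (S.min'_mem hSne)
      have hm1 := (Set.Finite.mem_toFinset hfin).mp hm.1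
      have h1 : f.order ≤ S.min' hSne := hvle _ hm1.1
      have h2 : f.order ≠ S.min' hSne := fun h => hm.2 h.symm
      have h3 : f.order < S.min' hSne := lt_of_le_of_ne h1 h2
      exact lt_min (by linarith) one_pos
    · intro t ht htv
      by_cases hle : t ≤ f.order + 1
      · have htS : t ∈ S := by
          rw [hS, Finset.mem_filter, Set.Finite.mem_toFinset]
          exact ⟨⟨ht, hle⟩, htv⟩
        have h1 := S.min'_le t htS
        have h2 : min (S.min' hSne - f.order) 1 ≤ S.min' hSne - f.order := min_le_left _ _
        linarith
      · push_neg at hle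
        have h2 : min (S.min' hSne - f.order) 1 ≤ 1 := min_le_right _ _
        linarith
  · refine ⟨1, one_pos, le_refl 1, ?_⟩
    intro t ht htv
    by_contra h
    push_neg at h
    exact hSne ⟨t, Finset.mem_filter.mpr ⟨(Set.Finite.mem_toFinset hfin).mpr ⟨ht, by linarith⟩, htv⟩⟩

end IterAux

open IterAux

/-- (Iterated limit property.)  Let `f ∈ R(x)` (nonzero, with discrete bounded-below
exponent set and a degree-growth constant `C`).  Then for all sufficiently small `ε > 0`
and any `u : Fin n → ℝ`:
`lc(lc(f)(p^u x)) = lc(f(p^{εu} x))` and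
`val(f) + ε · val(lc(f)(p^u x)) = val(f(p^{εu} x))`,
where `val` is the order of a Hahn series and `lc` its leading coefficient
(the coefficient at the order). -/
theorem iterated_limit (n : ℕ) (f : HahnSeries ℝ (KK n)) (hf : f ≠ 0)
    (hFin : FiniteBelow n f) (C : ℝ)
    (hC : ∀ t ∈ f.support, t ≠ f.order → degK n (f.coeff t) ≤ C * (t - f.order))
    (u : Fin n → ℝ) :
    ∃ ε₀ : ℝ, 0 < ε₀ ∧ ∀ ε : ℝ, 0 < ε → ε ≤ ε₀ →
      ((ratSubst n u (f.coeff f.order)).coeff (ratSubst n u (f.coeff f.order)).order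
          = (serSubst n (ε • u) f).coeff (serSubst n (ε • u) f).order)
      ∧ f.order + ε * (ratSubst n u (f.coeff f.order)).order
          = (serSubst n (ε • u) f).order := by
  classical
  have hvle : ∀ t ∈ f.support, f.order ≤ t := fun t ht =>
    HahnSeries.order_le_of_coeff_ne_zero ht
  have ha0 : f.coeff f.order ≠ 0 := mt HahnSeries.coeff_order_eq_zero.mp hf
  set v := f.order with hv
  set A : ℝ → HahnSeries ℝ (KK n) := fun t => ratSubst n u (f.coeff t) with hA
  set d : ℝ → ℝ := fun t => (A t).order with hd
  have hAv : A v ≠ 0 := ratSubst_ne_zero ha0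
  set K : ℝ := ‖u‖ * |C| with hK
  have hK0 : 0 ≤ K := mul_nonneg (norm_nonneg u) (abs_nonneg C)
  -- lower bound on orders
  have hdlb : ∀ t ∈ f.support, t ≠ v → -K * (t - v) ≤ d t := by
    intro t ht htv
    have hco : f.coeff t ≠ 0 := ht
    have hdeg : d t = degEps n u (f.coeff t) := by
      rw [hd]; exact ratSubst_order hco
    have htv' : v ≤ t := hvle t ht
    by_cases hu : u = 0
    · have h0 : d t = 0 := by rw [hdeg, hu, degEps_zero]
      have hK0' : K = 0 := by rw [hK, hu, norm_zero, zero_mul]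
      rw [h0, hK0']
      nlinarith
    · have h1 := neg_norm_degK_le hu (f.coeff t)
      have h2 := hC t ht htv
      have h3 : ‖u‖ * degK n (f.coeff t) ≤ ‖u‖ * (C * (t - v)) :=
        mul_le_mul_of_nonneg_left h2 (norm_nonneg u)
      have h4 : C * (t - v) ≤ |C| * (t - v) :=
        mul_le_mul_of_nonneg_right (le_abs_self C) (by linarith)
      have h5 : ‖u‖ * (C * (t - v)) ≤ ‖u‖ * (|C| * (t - v)) :=
        mul_le_mul_of_nonneg_left h4 (norm_nonneg u)
      have hKt : K * (t - v) = ‖u‖ * (|C| * (t - v)) := by rw [hK]; ring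
      rw [hdeg]
      linarith
  obtain ⟨δ, hδ0, hδ1, hδ⟩ := exists_gap f hFin
  set d₀ : ℝ := d v with hd₀
  have hDpos : (0:ℝ) < |d₀| + 1 := by positivity
  refine ⟨min (1 / (2 * (K + 1))) (δ / (2 * (|d₀| + 1))), lt_min (by positivity)
    (div_pos hδ0 (by positivity)), ?_⟩
  intro ε hε hεle
  have hε1 : ε ≤ 1 / (2 * (K + 1)) := le_trans hεle (min_le_left _ _)
  have hε2 : ε ≤ δ / (2 * (|d₀| + 1)) := le_trans hεle (min_le_right _ _)
  have hεK : ε * K ≤ 1 / 2 := by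
    have hne : K + 1 ≠ 0 := by linarith
    have h1 : ε * (K + 1) ≤ (1 / (2 * (K + 1))) * (K + 1) :=
      mul_le_mul_of_nonneg_right hε1 (by linarith)
    have h2 : (1 / (2 * (K + 1))) * (K + 1) = 1 / 2 := by field_simp
    nlinarith
  have hεd₀ : ε * |d₀| < δ / 2 := by
    have h4 : ε * (|d₀| + 1) ≤ δ / 2 := by
      rw [← le_div_iff₀ hDpos, div_div]
      exact hε2
    nlinarith
  -- key inequality
  have hkey : ∀ t ∈ f.support, t ≠ v → v + ε * d₀ < t + ε * d t := by
    intro t ht htv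
    have h1 := hdlb t ht htv
    have h2 := hδ t ht htv
    have h5 : ε * (-K * (t - v)) ≤ ε * d t := mul_le_mul_of_nonneg_left h1 hε.le
    have h6 : ε * d₀ ≤ ε * |d₀| := mul_le_mul_of_nonneg_left (le_abs_self d₀) hε.le
    have h7 : ε * K * (t - v) ≤ (1 / 2) * (t - v) :=
      mul_le_mul_of_nonneg_right hεK (by linarith)
    nlinarith
  -- finiteness of relevant index sets
  have hfinset : ∀ s : ℝ, {t | t ∈ f.support ∧ t + ε * d t ≤ s}.Finite := by
    intro s
    apply (hFin (max v (2 * s - v))).subset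
    rintro t ⟨ht, hts⟩
    refine ⟨ht, ?_⟩
    by_cases htv : t = v
    · subst htv; exact le_max_left _ _
    · have h1 := hdlb t ht htv
      have h2 := hvle t ht
      have h5 : ε * (-K * (t - v)) ≤ ε * d t := mul_le_mul_of_nonneg_left h1 hε.le
      have h7 : ε * K * (t - v) ≤ (1 / 2) * (t - v) :=
        mul_le_mul_of_nonneg_right hεK (by linarith)
      refine le_trans ?_ (le_max_right _ _)
      nlinarith
  -- facts about R t
  have hRzero : ∀ t : ℝ, f.coeff t = 0 → ratSubst n (ε • u) (f.coeff t) = 0 := by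
    intro t h; rw [h, ratSubst_zero]
  have hRo : ∀ t : ℝ, f.coeff t ≠ 0 → (ratSubst n (ε • u) (f.coeff t)).order = ε * d t := by
    intro t h
    rw [ratSubst_smul hε, emb_order hε (ratSubst_ne_zero h), hd]
  have hcos : ∀ s t : ℝ, (ratSubst n (ε • u) (f.coeff t)).coeff (s - t) ≠ 0 →
      t ∈ f.support ∧ ε * d t ≤ s - t := by
    intro s t hne
    have hco : f.coeff t ≠ 0 := by
      intro h
      rw [hRzero t h, HahnSeries.coeff_zero] at hne
      exact hne rfl
    exact ⟨hco, (hRo t hco) ▸ HahnSeries.order_le_of_coeff_ne_zero hne⟩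
  -- the summable family
  set F : ℝ → HahnSeries ℝ (KK n) :=
    fun t => HahnSeries.single t 1 * ratSubst n (ε • u) (f.coeff t) with hF
  have hFcoeff : ∀ t s : ℝ, (F t).coeff s = (ratSubst n (ε • u) (f.coeff t)).coeff (s - t) := by
    intro t s
    have h := HahnSeries.coeff_single_mul_add
      (r := (1 : KK n)) (x := ratSubst n (ε • u) (f.coeff t)) (a := s - t) (b := t)
    rw [one_mul, show s - t + t = s from by ring] at h
    rw [hF]
    exact h
  have hcoF : ∀ s : ℝ, {t | (F t).coeff s ≠ 0} ⊆ {t | t ∈ f.support ∧ t + ε * d t ≤ s} := by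
    intro s t ht
    rw [Set.mem_setOf_eq, hFcoeff] at ht
    obtain ⟨h1, h2⟩ := hcos s t ht
    exact ⟨h1, by linarith⟩
  have hfam : ∀ s : ℝ, {t | (F t).coeff s ≠ 0}.Finite :=
    fun s => (hfinset s).subset (hcoF s)
  have hU : (⋃ t : ℝ, (F t).support).IsPWO := by
    apply Set.IsWF.isPWO
    rw [Set.isWF_iff_no_descending_seq]
    intro g hg hmem
    set T := (hfinset (g 0)).toFinset with hT
    have hW : (⋃ t ∈ T, (F t).support).IsWF := by
      rw [← Finset.sup_set_eq_biUnion]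
      exact (Finset.isWF_sup T).mpr fun t _ => (F t).isWF_support
    refine (Set.isWF_iff_no_descending_seq.mp hW) g hg fun k => ?_
    have hmk := hmem k
    rw [Set.mem_iUnion] at hmk
    obtain ⟨t, hgk⟩ := hmk
    have h1 : (F t).coeff (g k) ≠ 0 := hgk
    have h2 := hcoF (g k) h1
    have hgk0 : g k ≤ g 0 := hg.antitone (Nat.zero_le k)
    have h3 : t ∈ T := (Set.Finite.mem_toFinset _).mpr ⟨h2.1, by linarith [h2.2]⟩
    exact Set.mem_biUnion h3 hgk
  set Fam : HahnSeries.SummableFamily ℝ (KK n) ℝ := ⟨F, hU, hfam⟩ with hFam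
  set g0 : HahnSeries ℝ (KK n) := Fam.hsum with hg0
  have hspec : ∀ s : ℝ, g0.coeff s
      = ∑ᶠ t : ℝ, (ratSubst n (ε • u) (f.coeff t)).coeff (s - t) := by
    intro s
    rw [hg0, HahnSeries.SummableFamily.coeff_hsum]
    exact finsum_congr fun t => hFcoeff t s
  have hser : serSubst n (ε • u) f = g0 := by
    have hex : ∃ g' : HahnSeries ℝ (KK n),
        ∀ s : ℝ, g'.coeff s = ∑ᶠ t : ℝ, (ratSubst n (ε • u) (f.coeff t)).coeff (s - t) :=
      ⟨g0, hspec⟩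
    rw [serSubst, dif_pos hex]
    ext s
    rw [hex.choose_spec s, hspec s]
  set s₀ : ℝ := v + ε * d₀ with hs₀def
  have hterm : ∀ s ≤ s₀, ∀ t : ℝ, t ≠ v → (ratSubst n (ε • u) (f.coeff t)).coeff (s - t) = 0 := by
    intro s hs t htv
    by_cases hco : f.coeff t = 0
    · rw [hRzero t hco, HahnSeries.coeff_zero]
    · apply HahnSeries.coeff_eq_zero_of_lt_order
      rw [hRo t hco]
      have := hkey t hco htv
      linarith
  have hlow : ∀ s < s₀, g0.coeff s = 0 := by
    intro s hs
    rw [hspec]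
    apply finsum_eq_zero_of_forall_eq_zero
    intro t
    by_cases htv : t = v
    · rw [htv]
      apply HahnSeries.coeff_eq_zero_of_lt_order
      rw [hRo v ha0, ← hd₀]
      rw [hs₀def] at hs
      linarith
    · exact hterm s hs.le t htv
  have hcoeff₀ : g0.coeff s₀ = (A v).coeff d₀ := by
    rw [hspec]
    rw [finsum_eq_single _ v (fun t htv => hterm s₀ le_rfl t htv)]
    rw [show s₀ - v = ε * d₀ from by rw [hs₀def]; ring]
    rw [ratSubst_smul hε, emb_coeff hε, hA]
  have hlc : (A v).coeff d₀ ≠ 0 := by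
    rw [hd₀, hd]
    exact mt HahnSeries.coeff_order_eq_zero.mp hAv
  have horder : g0.order = s₀ := order_eq_of (by rw [hcoeff₀]; exact hlc) hlow
  constructor
  · rw [hser, horder, hcoeff₀, hA, hd₀, hd, hA]
  · rw [hser, horder, hs₀def, hd₀, hd, hA]
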